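/- arXiv:2305.16654 — 2 statements merged into one kernel-verified Lean document; each statement's English description precedes it below -/
import Mathlib

section
/- Let m ∈ ℕ with 4 | m, r ∈ ℤ with gcd(r, m) = 1, and set ζ := e(r/m). Let r̄ ∈ ℤ with r̄ ≡ r (mod 4). Then for all integers n, n₀ ≥ 0 with n ≡ n₀ (mod m/2), one has ζ^{n(n+1)/2} = ζ^{n₀(n₀+1)/2} · e( (n − n₀)/4 + (−1)^{n₀} · (r̄/2) · (n − n₀)/m ). -/
/-- `e(x) = e^{2πix}`. -/
noncomputable def e (x : ℝ) : ℂ := Complex.exp (2 * Real.pi * Complex.I * x)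

lemma e_add (x y : ℝ) : e (x + y) = e x * e y := by
  unfold e
  rw [← Complex.exp_add]
  push_cast
  ring_nf

lemma e_int_add (x : ℝ) (k : ℤ) : e (x + (k : ℝ)) = e x := by
  rw [e_add]
  have : e (k : ℝ) = 1 := by
    unfold e
    push_cast
    rw [show (2 * (Real.pi:ℂ) * Complex.I * (k:ℂ)) = (k:ℂ) * (2 * Real.pi * Complex.I) by ring]
    exact Complex.exp_int_mul_two_pi_mul_I k
  rw [this, mul_one]

lemma e_zpow (x : ℝ) (t : ℤ) : e x ^ t = e ((t : ℝ) * x) := by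
  unfold e
  rw [← Complex.exp_int_mul]
  push_cast
  ring_nf

/-- Lemma (part 1): for `4 ∣ m`, `gcd(r,m) = 1`, `ζ = e(r/m)`, `r̄ ≡ r (mod 4)`, and all
`n ≡ n₀ (mod m/2)` with `n, n₀ ≥ 0`, one has
`ζ^{n(n+1)/2} = ζ^{n₀(n₀+1)/2} · e((n−n₀)/4 + (−1)^{n₀}·(r̄/2)·(n−n₀)/m)`. -/
theorem zeta_pow_triangular (m : ℕ) (hm : 4 ∣ m) (r : ℤ) (hgcd : Int.gcd r m = 1)
    (ζ : ℂ) (hζ : ζ = e ((r : ℝ) / m))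
    (rbar : ℤ) (hrbar : rbar % 4 = r % 4)
    (n n₀ : ℤ) (hn : 0 ≤ n) (hn₀ : 0 ≤ n₀) (hcong : ((m / 2 : ℕ) : ℤ) ∣ n - n₀) :
    ζ ^ (n * (n + 1) / 2) =
      ζ ^ (n₀ * (n₀ + 1) / 2) *
        e (((n - n₀ : ℤ) : ℝ) / 4 +
            (-1 : ℝ) ^ n₀ * ((rbar : ℝ) / 2) * (((n - n₀ : ℤ) : ℝ) / m)) := by
  subst hζ
  rcases eq_or_ne m 0 with rfl | hm0
  · have hnn : n = n₀ := by
      simp only [Nat.zero_div, Nat.cast_zero, zero_dvd_iff, sub_eq_zero] at hcong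
      exact hcong
    subst hnn
    have : e (((n - n : ℤ) : ℝ) / 4 +
        (-1 : ℝ) ^ n * ((rbar : ℝ) / 2) * (((n - n : ℤ) : ℝ) / (0:ℕ))) = 1 := by
      simp [e]
    rw [this, mul_one]
  · -- main case
    obtain ⟨m', hm'⟩ := hm
    have hm'pos : 0 < m' := by omega
    set M : ℤ := (m' : ℤ) with hM
    have hMpos : 0 < M := by rw [hM]; exact_mod_cast hm'pos
    obtain ⟨k, hk⟩ := hcong
    have hd : n - n₀ = 2 * M * k := by
      rw [hk]
      have h2 : (m / 2 : ℕ) = 2 * m' := by omega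
      rw [h2]; push_cast; ring
    -- r is odd
    have hrodd : Odd r := by
      rcases Int.even_or_odd r with ⟨u, hu⟩ | h
      · exfalso
        have h2r : (2:ℤ) ∣ r := ⟨u, by omega⟩
        have h2m : (2:ℤ) ∣ (m:ℤ) := ⟨2 * M, by rw [hm']; push_cast; ring⟩
        have : (2:ℤ) ∣ (Int.gcd r m : ℤ) := Int.dvd_coe_gcd h2r h2m
        rw [hgcd] at this
        norm_num at this
      · exact h
    -- parity of n₀ and key divisibility
    have h4 : (4:ℤ) ∣ (r - rbar) := by omega
    obtain ⟨ε, hεR, A, hA⟩ :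
        ∃ ε : ℤ, ((-1 : ℝ) ^ n₀ = (ε : ℝ)) ∧
          ∃ A : ℤ, r * (2 * n₀ + 1) - ε * rbar = 4 * A := by
      obtain ⟨v, hv⟩ := h4
      rcases Int.even_or_odd n₀ with ⟨u, hu⟩ | ⟨u, hu⟩
      · refine ⟨1, ?_, r * u + v, by rw [hu]; linarith [hv]⟩
        rw [Even.neg_one_zpow ⟨u, hu⟩]; norm_num
      · refine ⟨-1, ?_, r * u + r - v, by rw [hu]; linarith [hv]⟩
        rw [Odd.neg_one_zpow ⟨u, hu⟩]; norm_num
    -- 2 ∣ k * (r*k - 1)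
    obtain ⟨B, hB⟩ : ∃ B : ℤ, k * (r * k - 1) = 2 * B := by
      obtain ⟨w, hw⟩ := hrodd
      rcases Int.even_or_odd k with ⟨u, hu⟩ | ⟨u, hu⟩
      · exact ⟨u * (r * k - 1), by rw [hu]; ring⟩
      · exact ⟨k * (2 * w * u + w + u), by rw [hu, hw]; ring⟩
    set t : ℤ := n * (n + 1) / 2 with htdef
    set t₀ : ℤ := n₀ * (n₀ + 1) / 2 with ht₀def
    have ht : 2 * t = n * (n + 1) := Int.mul_ediv_cancel' (Int.even_mul_succ_self n).two_dvd
    have ht₀ : 2 * t₀ = n₀ * (n₀ + 1) := Int.mul_ediv_cancel' (Int.even_mul_succ_self n₀).two_dvd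
    set j : ℤ := k * A + B * M with hj
    have hn' : n = n₀ + 2 * M * k := by linarith [hd]
    have hint : 2 * r * (t - t₀) = 2 * M * (n - n₀) + ε * rbar * (n - n₀) + 8 * M * j := by
      linear_combination r * ht - r * ht₀ +
        (r * (n + n₀ + 1) - 2 * M - ε * rbar + 2 * M * k * r) * hd +
        2 * M * k * hA + 4 * M * M * hB
    have hmR : (m : ℝ) = 4 * (M : ℝ) := by rw [hm', hM]; push_cast; ring
    have hMR : (M : ℝ) ≠ 0 := by positivity
    rw [e_zpow, e_zpow, hεR, ← e_add]
    have harg : (t : ℝ) * ((r : ℝ) / m) =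
        ((t₀ : ℝ) * ((r : ℝ) / m) +
          (((n - n₀ : ℤ) : ℝ) / 4 + (ε : ℝ) * ((rbar : ℝ) / 2) * (((n - n₀ : ℤ) : ℝ) / m)))
          + (j : ℝ) := by
      have hintR : 2 * (r:ℝ) * ((t:ℝ) - t₀) =
          2 * M * ((n:ℝ) - n₀) + ε * rbar * ((n:ℝ) - n₀) + 8 * M * (j:ℝ) := by
        exact_mod_cast hint
      rw [hmR]
      push_cast
      field_simp
      linear_combination hintR
    rw [harg, e_int_add]
end

section
/- For every c > 0, the set { n ∈ ℕ : |cos(√(2|V|·n)) + (−1)^{n+1}·sin(√(2|V|·n))| ≤ e^{−c√n} } has natural density zero. (The equidistribution/discrepancy estimate in Section 5 of the proof showing that the trigonometric factor in the main term of V₁(n) is exponentially small only on a density-zero set of n.) -/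
/-- `|V| = (1/8) Σ_{n=1}^∞ sin(nπ/3)/n²`. -/
noncomputable def Vabs : ℝ :=
  (1 / 8) * ∑' n : ℕ, Real.sin ((n + 1) * Real.pi / 3) / (n + 1) ^ 2

open scoped Classical in
/-- `S ⊆ ℕ` has natural density `d` if `#(S ∩ [0,N]) / N → d` as `N → ∞`. -/
def HasNatDensity (S : Set ℕ) (d : ℝ) : Prop :=
  Filter.Tendsto
    (fun N : ℕ => (((Finset.range (N + 1)).filter (fun n => n ∈ S)).card : ℝ) / N)
    Filter.atTop (nhds d)

open Real Filter Finset Topology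

/-- If `|cos y| ≤ ε` then `y` is within `(π/2)ε` of a zero of cosine. -/
lemma near_grid_of_cos_small {y ε : ℝ} (h : |Real.cos y| ≤ ε) :
    ∃ j : ℤ, |y - (π / 2 + j * π)| ≤ π / 2 * ε := by
  set j : ℤ := round ((y - π / 2) / π) with hj
  refine ⟨j, ?_⟩
  set u : ℝ := y - π / 2 - j * π with hu
  have hpi := Real.pi_pos
  have hub : |u| ≤ π / 2 := by
    have h1 : |(y - π / 2) / π - j| ≤ 1 / 2 := abs_sub_round _
    have h2 : (y - π / 2) / π - j = u / π := by field_simp [hu]; ring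
    rw [h2, abs_div, abs_of_pos hpi, div_le_div_iff₀ (by positivity) (by norm_num)] at h1
    linarith
  have hcos : |Real.cos y| = |Real.sin u| := by
    have hy : y = (u + π / 2) + (j : ℤ) * π := by rw [hu]; ring
    rw [hy, Real.cos_add_int_mul_pi, Real.cos_add_pi_div_two]
    rcases Int.even_or_odd j with hp | hp
    · rw [hp.neg_one_zpow]; simp
    · rw [Odd.neg_one_zpow hp]; simp
  have hjordan : 2 / π * |u| ≤ |Real.sin u| := Real.mul_abs_le_abs_sin hub
  have hval : |y - (π / 2 + j * π)| = |u| := by rw [hu]; ring_nf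
  rw [hval]
  rw [hcos] at h
  have h4 : π / 2 * (2 / π * |u|) ≤ π / 2 * ε :=
    mul_le_mul_of_nonneg_left (le_trans hjordan h) (by positivity)
  have h5 : π / 2 * (2 / π * |u|) = |u| := by field_simp
  linarith

/-- If the trig factor is `≤ ε`, then `a√n` is within `2ε` of the grid `π/4 + (π/2)ℤ`. -/
lemma grid_of_small (a : ℝ) (n : ℕ) {ε : ℝ}
    (h : |Real.cos (a * Real.sqrt n) + (-1 : ℝ) ^ (n + 1) * Real.sin (a * Real.sqrt n)| ≤ ε) :
    ∃ k : ℤ, |a * Real.sqrt n - π / 4 - k * (π / 2)| ≤ 2 * ε := by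
  set x : ℝ := a * Real.sqrt n with hx
  have h2 : (0 : ℝ) < Real.sqrt 2 := Real.sqrt_pos.2 (by norm_num)
  have h2' : Real.sqrt 2 * Real.sqrt 2 = 2 := Real.mul_self_sqrt (by norm_num)
  have hpi4 := Real.pi_le_four
  have hpi := Real.pi_pos
  have h2ge1 : (1 : ℝ) ≤ Real.sqrt 2 := by nlinarith
  have hεnn : 0 ≤ ε := le_trans (abs_nonneg _) h
  have key : ∀ y : ℝ, |Real.cos y| * Real.sqrt 2 ≤ ε →
      ∃ j : ℤ, |y - (π / 2 + j * π)| ≤ 2 * ε := by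
    intro y hy
    have hcos : |Real.cos y| ≤ ε / Real.sqrt 2 := by
      rw [le_div_iff₀ h2]; exact hy
    obtain ⟨j, hj⟩ := near_grid_of_cos_small hcos
    refine ⟨j, hj.trans ?_⟩
    have heq : π / 2 * (ε / Real.sqrt 2) = π * ε / (2 * Real.sqrt 2) := by ring
    rw [heq, div_le_iff₀ (by positivity)]
    nlinarith
  rcases Nat.even_or_odd n with he | ho
  · -- n even : sign is -1, cos x - sin x = √2 cos (x + π/4)
    have hs : ((-1 : ℝ)) ^ (n + 1) = -1 := (he.add_one).neg_one_pow
    rw [hs] at h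
    have hid : Real.cos x + -1 * Real.sin x = Real.sqrt 2 * Real.cos (x + π / 4) := by
      rw [Real.cos_add, Real.cos_pi_div_four, Real.sin_pi_div_four]
      nlinarith [Real.sin_le_one x, Real.neg_one_le_sin x, Real.cos_le_one x,
        Real.neg_one_le_cos x]
    rw [hid, abs_mul, abs_of_pos h2, mul_comm] at h
    obtain ⟨j, hj⟩ := key (x + π / 4) h
    refine ⟨2 * j, ?_⟩
    have heq2 : x - π / 4 - (2 * j : ℤ) * (π / 2) = x + π / 4 - (π / 2 + j * π) := by
      push_cast; ring
    rw [heq2]; exact hj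
  · -- n odd : sign is +1, cos x + sin x = √2 cos (x - π/4)
    have hs : ((-1 : ℝ)) ^ (n + 1) = 1 := (ho.add_one).neg_one_pow
    rw [hs] at h
    have hid : Real.cos x + 1 * Real.sin x = Real.sqrt 2 * Real.cos (x - π / 4) := by
      rw [Real.cos_sub, Real.cos_pi_div_four, Real.sin_pi_div_four]
      nlinarith [Real.sin_le_one x, Real.neg_one_le_sin x, Real.cos_le_one x,
        Real.neg_one_le_cos x]
    rw [hid, abs_mul, abs_of_pos h2, mul_comm] at h
    obtain ⟨j, hj⟩ := key (x - π / 4) h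
    refine ⟨2 * j + 1, ?_⟩
    have heq2 : x - π / 4 - ((2 * j + 1 : ℤ)) * (π / 2) = x - π / 4 - (π / 2 + j * π) := by
      push_cast; ring
    rw [heq2]; exact hj

/-- Round version: the *nearest* grid point works. -/
lemma round_grid_of_small (a : ℝ) (n : ℕ) {ε : ℝ}
    (h : |Real.cos (a * Real.sqrt n) + (-1 : ℝ) ^ (n + 1) * Real.sin (a * Real.sqrt n)| ≤ ε) :
    |a * Real.sqrt n - π / 4 -
      (round ((a * Real.sqrt n - π / 4) / (π / 2)) : ℤ) * (π / 2)| ≤ 2 * ε := by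
  obtain ⟨k, hk⟩ := grid_of_small a n h
  set x : ℝ := a * Real.sqrt n
  set t : ℝ := (x - π / 4) / (π / 2) with ht
  have hpi := Real.pi_pos
  have h2 : (0 : ℝ) < π / 2 := by linarith
  have hxt : x - π / 4 = t * (π / 2) := by rw [ht, div_mul_cancel₀ _ h2.ne']
  have hr : |t - round t| ≤ |t - k| := round_le t k
  calc |x - π / 4 - (round t : ℤ) * (π / 2)| = |(t - round t) * (π / 2)| := by
        rw [hxt]; congr 1; ring
    _ = |t - round t| * (π / 2) := by rw [abs_mul, abs_of_pos h2]
    _ ≤ |t - k| * (π / 2) := mul_le_mul_of_nonneg_right hr h2.le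
    _ = |(t - k) * (π / 2)| := by rw [abs_mul, abs_of_pos h2]
    _ = |x - π / 4 - k * (π / 2)| := by rw [hxt]; congr 1; ring
    _ ≤ 2 * ε := hk

lemma tendsto_sqrt_atTop : Tendsto Real.sqrt atTop atTop := by
  refine tendsto_atTop_atTop.2 fun b => ⟨b ^ 2, fun x hx => ?_⟩
  calc b ≤ |b| := le_abs_self b
    _ = Real.sqrt (b ^ 2) := (Real.sqrt_sq_eq_abs b).symm
    _ ≤ Real.sqrt x := Real.sqrt_le_sqrt hx

set_option maxHeartbeats 1000000 in
open scoped Classical in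
/-- Main auxiliary density-zero lemma for arbitrary positive frequency `a`. -/
lemma aux_density_zero (a c : ℝ) (ha : 0 < a) (hc : 0 < c) :
    HasNatDensity
      {n : ℕ | |Real.cos (a * Real.sqrt n) + (-1 : ℝ) ^ (n + 1) * Real.sin (a * Real.sqrt n)| ≤
        Real.exp (-c * Real.sqrt n)} 0 := by
  set S : Set ℕ := {n : ℕ |
    |Real.cos (a * Real.sqrt n) + (-1 : ℝ) ^ (n + 1) * Real.sin (a * Real.sqrt n)| ≤
      Real.exp (-c * Real.sqrt n)} with hS
  have hpi := Real.pi_pos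
  -- eventual smallness hypothesis
  have hev : ∀ᶠ N : ℕ in atTop,
      4 * Real.exp (-c * Real.sqrt (Real.sqrt N)) * (2 * Real.sqrt N) < a ∧ 1 ≤ N := by
    have hF : Tendsto (fun t : ℝ => t ^ 2 * Real.exp (-(c * t))) atTop (nhds 0) := by
      have h1 : Tendsto (fun t : ℝ => c * t) atTop atTop :=
        Tendsto.const_mul_atTop hc tendsto_id
      have h2 := (tendsto_pow_mul_exp_neg_atTop_nhds_zero 2).comp h1
      have h3 := h2.div_const (c ^ 2)
      rw [zero_div] at h3
      refine h3.congr fun t => ?_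
      have hc2 : c ^ 2 ≠ 0 := by positivity
      simp only [Function.comp_apply]
      field_simp
    have hG : Tendsto (fun N : ℕ => Real.sqrt N * Real.exp (-(c * Real.sqrt (Real.sqrt N))))
        atTop (nhds 0) := by
      have hcomp : Tendsto (fun N : ℕ => Real.sqrt (Real.sqrt N)) atTop atTop :=
        _root_.tendsto_sqrt_atTop.comp (_root_.tendsto_sqrt_atTop.comp tendsto_natCast_atTop_atTop)
      have h4 := hF.comp hcomp
      refine h4.congr fun N => ?_
      simp only [Function.comp_apply]
      rw [Real.sq_sqrt (Real.sqrt_nonneg _)]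
    have h8 : Tendsto (fun N : ℕ => 8 * (Real.sqrt N * Real.exp (-(c * Real.sqrt (Real.sqrt N)))))
        atTop (nhds (8 * 0)) := tendsto_const_nhds.mul hG
    rw [mul_zero] at h8
    filter_upwards [h8.eventually (gt_mem_nhds ha), eventually_ge_atTop 1] with N hN hN1
    refine ⟨?_, hN1⟩
    calc 4 * Real.exp (-c * Real.sqrt (Real.sqrt N)) * (2 * Real.sqrt N)
        = 8 * (Real.sqrt N * Real.exp (-(c * Real.sqrt (Real.sqrt N)))) := by ring_nf
      _ < a := hN
  -- cardinality bound
  have hcard : ∀ᶠ N : ℕ in atTop,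
      (((Finset.range (N + 1)).filter (fun n => n ∈ S)).card : ℝ) ≤
        (2 * a + 1) * Real.sqrt N + 7 := by
    filter_upwards [hev] with N hN
    obtain ⟨hNsmall, hN1⟩ := hN
    set K : ℕ := Nat.sqrt N with hK
    set T : Finset ℕ := (Finset.range (N + 1)).filter (fun n => n ∈ S) with hT
    set M : ℤ := ⌈a * Real.sqrt N⌉ + 1 with hM
    have hMnn : (0 : ℤ) ≤ M := by
      have h0 : (0 : ℝ) ≤ a * Real.sqrt N := by positivity
      have := Int.ceil_nonneg h0
      omega
    have hNpos : 0 < N := hN1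
    have hsqN : (0:ℝ) < Real.sqrt N := Real.sqrt_pos.2 (by exact_mod_cast hNpos)
    -- facts about K
    have hKle : (K : ℝ) ≤ Real.sqrt N := by
      have h1 : ((K ^ 2 : ℕ) : ℝ) ≤ (N : ℝ) := by exact_mod_cast Nat.sqrt_le' N
      calc (K : ℝ) = Real.sqrt ((K : ℝ) ^ 2) := by rw [Real.sqrt_sq (Nat.cast_nonneg K)]
        _ ≤ Real.sqrt N := Real.sqrt_le_sqrt (by push_cast at h1 ⊢; nlinarith)
    have hKgt : Real.sqrt N < (K : ℝ) + 1 := by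
      have h1 : (N : ℝ) < ((K : ℝ) + 1) ^ 2 := by exact_mod_cast Nat.lt_succ_sqrt' N
      nlinarith [Real.sq_sqrt (Nat.cast_nonneg N : (0:ℝ) ≤ N)]
    -- the rounding map
    set r : ℕ → ℤ := fun n => round ((a * Real.sqrt n - π / 4) / (π / 2)) with hr
    -- basic membership facts
    have hmem : ∀ n ∈ T, n ≤ N ∧ n ∈ S := by
      intro n hn
      rw [hT, Finset.mem_filter, Finset.mem_range] at hn
      exact ⟨by omega, hn.2⟩
    -- key grid estimate for members of S beyond K
    have hgrid : ∀ n ∈ T, K < n →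
        |a * Real.sqrt n - π / 4 - (r n) * (π / 2)| ≤
          2 * Real.exp (-c * Real.sqrt (Real.sqrt N)) := by
      intro n hn hKn
      obtain ⟨hnN, hnS⟩ := hmem n hn
      have h1 := round_grid_of_small a n hnS
      refine h1.trans ?_
      have hsq : Real.sqrt (Real.sqrt N) ≤ Real.sqrt n := by
        apply Real.sqrt_le_sqrt
        calc Real.sqrt N ≤ (K : ℝ) + 1 := hKgt.le
          _ ≤ (n : ℝ) := by exact_mod_cast hKn
      have hle : Real.exp (-c * Real.sqrt n) ≤ Real.exp (-c * Real.sqrt (Real.sqrt N)) :=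
        Real.exp_le_exp.2 (by nlinarith)
      linarith
    -- split T
    have hsplit : T.card = (T.filter (fun n => n ≤ K)).card +
        (T.filter (fun n => ¬ n ≤ K)).card :=
      (Finset.card_filter_add_card_filter_not _).symm
    have hcard1 : (T.filter (fun n => n ≤ K)).card ≤ K + 1 := by
      calc (T.filter (fun n => n ≤ K)).card ≤ (Finset.range (K + 1)).card := by
            apply Finset.card_le_card
            intro n hn
            rw [Finset.mem_filter] at hn
            rw [Finset.mem_range]
            omega
        _ = K + 1 := Finset.card_range _
    have hcard2 : (T.filter (fun n => ¬ n ≤ K)).card ≤ (Finset.Icc (-M) M).card := by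
      apply Finset.card_le_card_of_injOn r
      · -- maps into Icc
        intro n hn
        rw [Finset.mem_coe, Finset.mem_filter] at hn
        obtain ⟨hnT, hnK⟩ := hn
        obtain ⟨hnN, _⟩ := hmem n hnT
        have hx0 : (0:ℝ) ≤ a * Real.sqrt n := by positivity
        have hxN : a * Real.sqrt n ≤ a * Real.sqrt N := by
          apply mul_le_mul_of_nonneg_left _ ha.le
          exact Real.sqrt_le_sqrt (by exact_mod_cast hnN)
        set t : ℝ := (a * Real.sqrt n - π / 4) / (π / 2) with htdef
        have h2pos : (0:ℝ) < π / 2 := by linarith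
        have htabs : |t| ≤ a * Real.sqrt N + 1 / 2 := by
          rw [htdef, abs_div, abs_of_pos h2pos, div_le_iff₀ h2pos]
          have hpile : (2:ℝ) ≤ π := by nlinarith [Real.pi_gt_three]
          rw [abs_le]
          constructor <;> nlinarith
        have hrabs : |(r n : ℝ)| ≤ a * Real.sqrt N + 1 := by
          have h1 : |t - round t| ≤ 1 / 2 := abs_sub_round t
          have h2 : |(round t : ℝ)| ≤ |t| + 1 / 2 := by
            calc |(round t : ℝ)| = |t - (t - round t)| := by congr 1; ring
              _ ≤ |t| + |t - round t| := abs_sub _ _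
              _ ≤ |t| + 1 / 2 := by linarith
          have hrn : r n = round t := rfl
          rw [hrn]
          linarith
        have hMr : |(r n : ℝ)| ≤ (M : ℝ) := by
          have hcl : a * Real.sqrt N + 1 ≤ (M : ℝ) := by
            rw [hM]
            push_cast
            have := Int.le_ceil (a * Real.sqrt N)
            linarith
          linarith
        rw [Finset.mem_coe, Finset.mem_Icc]
        rw [abs_le] at hMr
        constructor
        · exact_mod_cast hMr.1
        · exact_mod_cast hMr.2
      · -- injectivity
        have key2 : ∀ p q : ℕ, p ∈ T → q ∈ T → K < p → K < q → r p = r q → p < q → False := by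
          intro n m hnT hmT hnK hmK hnm hlt
          obtain ⟨hnN, _⟩ := hmem n hnT
          obtain ⟨hmN, _⟩ := hmem m hmT
          have hgn := hgrid n hnT (by omega)
          have hgm := hgrid m hmT (by omega)
          rw [hnm] at hgn
          set E : ℝ := Real.exp (-c * Real.sqrt (Real.sqrt N)) with hE
          have hEpos : 0 < E := Real.exp_pos _
          have hsm : (0:ℝ) ≤ Real.sqrt m := Real.sqrt_nonneg _
          have hsn : (0:ℝ) ≤ Real.sqrt n := Real.sqrt_nonneg _
          have hprod : (Real.sqrt m - Real.sqrt n) * (Real.sqrt m + Real.sqrt n)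
              = (m : ℝ) - n := by
            have h1 : Real.sqrt m * Real.sqrt m = (m : ℝ) :=
              Real.mul_self_sqrt (Nat.cast_nonneg m)
            have h2 : Real.sqrt n * Real.sqrt n = (n : ℝ) :=
              Real.mul_self_sqrt (Nat.cast_nonneg n)
            nlinarith
          have hmn1 : (n:ℝ) + 1 ≤ (m:ℝ) := by exact_mod_cast hlt
          have hsmN : Real.sqrt m ≤ Real.sqrt N := Real.sqrt_le_sqrt (by exact_mod_cast hmN)
          have hsnN : Real.sqrt n ≤ Real.sqrt N := Real.sqrt_le_sqrt (by exact_mod_cast hnN)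
          have hd0 : Real.sqrt n ≤ Real.sqrt m := Real.sqrt_le_sqrt (by exact_mod_cast hlt.le)
          have hgap : 1 / (2 * Real.sqrt N) ≤ Real.sqrt m - Real.sqrt n := by
            rw [div_le_iff₀ (by positivity)]
            nlinarith [mul_nonneg (sub_nonneg.2 hd0)
              (by linarith : (0:ℝ) ≤ 2 * Real.sqrt N - Real.sqrt m - Real.sqrt n)]
          have htri : a * (Real.sqrt m - Real.sqrt n) ≤ 4 * E := by
            have h1 : a * (Real.sqrt m - Real.sqrt n) =
                (a * Real.sqrt m - π / 4 - (r m) * (π / 2)) -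
                (a * Real.sqrt n - π / 4 - (r m) * (π / 2)) := by ring
            calc a * (Real.sqrt m - Real.sqrt n)
                ≤ |(a * Real.sqrt m - π / 4 - (r m) * (π / 2)) -
                    (a * Real.sqrt n - π / 4 - (r m) * (π / 2))| := h1.le.trans (le_abs_self _)
              _ ≤ |a * Real.sqrt m - π / 4 - (r m) * (π / 2)| +
                  |a * Real.sqrt n - π / 4 - (r m) * (π / 2)| := abs_sub _ _
              _ ≤ 2 * E + 2 * E := add_le_add hgm hgn
              _ = 4 * E := by ring
          have hlow : a / (2 * Real.sqrt N) ≤ a * (Real.sqrt m - Real.sqrt n) := by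
            rw [div_eq_mul_one_div]
            exact mul_le_mul_of_nonneg_left hgap ha.le
          have hsmall : 4 * E < a / (2 * Real.sqrt N) := by
            rw [lt_div_iff₀ (by positivity)]
            exact hNsmall
          linarith
        intro n hn m hm hnm
        simp only [Finset.coe_filter, Set.mem_setOf_eq] at hn hm
        by_contra hne
        rcases lt_trichotomy n m with h | h | h
        · exact key2 n m hn.1 hm.1 (by omega) (by omega) hnm h
        · exact hne h
        · exact key2 m n hm.1 hn.1 (by omega) (by omega) hnm.symm h
    -- assemble the cardinality bound
    have hIcc : ((Finset.Icc (-M) M).card : ℝ) ≤ 2 * (a * Real.sqrt N) + 5 := by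
      have h2 : (M : ℝ) ≤ a * Real.sqrt N + 2 := by
        rw [hM]
        push_cast
        have := Int.ceil_lt_add_one (a * Real.sqrt N)
        linarith
      calc ((Finset.Icc (-M) M).card : ℝ) = (((M + 1 - -M).toNat : ℤ) : ℝ) := by
            rw [Int.card_Icc]; norm_cast
        _ = ((M + 1 - -M : ℤ) : ℝ) := by rw [Int.toNat_of_nonneg (by omega)]
        _ ≤ 2 * (a * Real.sqrt N) + 5 := by push_cast; linarith
    have hfin : (T.card : ℝ) ≤ ((K : ℝ) + 1) + (2 * (a * Real.sqrt N) + 5) := by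
      rw [hsplit]
      push_cast
      have h1 : ((T.filter (fun n => n ≤ K)).card : ℝ) ≤ (K : ℝ) + 1 := by
        exact_mod_cast hcard1
      have h2 : ((T.filter (fun n => ¬ n ≤ K)).card : ℝ) ≤
          ((Finset.Icc (-M) M).card : ℝ) := by exact_mod_cast hcard2
      linarith
    calc (T.card : ℝ) ≤ ((K : ℝ) + 1) + (2 * (a * Real.sqrt N) + 5) := hfin
      _ ≤ (2 * a + 1) * Real.sqrt N + 7 := by nlinarith
  -- conclude: density zero
  have hbound : Tendsto (fun N : ℕ => ((2 * a + 1) * Real.sqrt N + 7) / N) atTop (nhds 0) := by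
    have h1 : Tendsto (fun N : ℕ => (2 * a + 1) / Real.sqrt N + 7 / N) atTop (nhds (0 + 0)) := by
      apply Tendsto.add
      · exact tendsto_const_nhds.div_atTop
          (_root_.tendsto_sqrt_atTop.comp tendsto_natCast_atTop_atTop)
      · exact tendsto_const_nhds.div_atTop tendsto_natCast_atTop_atTop
    rw [add_zero] at h1
    refine h1.congr' ?_
    filter_upwards [eventually_ge_atTop 1] with N hN
    have hsq : (0:ℝ) < Real.sqrt N := Real.sqrt_pos.2 (by exact_mod_cast hN)
    have hNpos : (0:ℝ) < (N:ℝ) := by exact_mod_cast hN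
    have hNs : Real.sqrt N * Real.sqrt N = (N:ℝ) := Real.mul_self_sqrt (by positivity)
    have e1 : ((2 * a + 1) * Real.sqrt N) / (N : ℝ) = (2 * a + 1) / Real.sqrt N := by
      rw [div_eq_div_iff hNpos.ne' hsq.ne', mul_assoc, hNs]
    rw [← e1, ← add_div]
  unfold HasNatDensity
  apply squeeze_zero' (g := fun N : ℕ => ((2 * a + 1) * Real.sqrt N + 7) / N)
  · filter_upwards with N
    positivity
  · filter_upwards [hcard, eventually_ge_atTop 1] with N hN hN1
    have hNpos : (0:ℝ) < (N:ℝ) := by exact_mod_cast hN1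
    exact div_le_div_of_nonneg_right hN hNpos.le
  · exact hbound

set_option maxHeartbeats 1000000 in
open scoped Classical in
/-- The trigonometric factor of the main term of `V₁(n)` is exponentially small only on a
set of natural density zero. -/
theorem trig_factor_small_density_zero (c : ℝ) (hc : 0 < c) :
    HasNatDensity
      {n : ℕ |
        |Real.cos (Real.sqrt (2 * Vabs * n)) +
            (-1 : ℝ) ^ (n + 1) * Real.sin (Real.sqrt (2 * Vabs * n))| ≤
          Real.exp (-c * Real.sqrt n)} 0 := by
  rcases le_or_gt Vabs 0 with hV | hV
  · -- degenerate case: the set is contained in `{0}`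
    set S : Set ℕ := {n : ℕ |
      |Real.cos (Real.sqrt (2 * Vabs * n)) +
          (-1 : ℝ) ^ (n + 1) * Real.sin (Real.sqrt (2 * Vabs * n))| ≤
        Real.exp (-c * Real.sqrt n)} with hS
    have hsub : ∀ N : ℕ, (Finset.range (N + 1)).filter (fun n => n ∈ S) ⊆ {0} := by
      intro N n hn
      rw [Finset.mem_filter] at hn
      rcases Nat.eq_zero_or_pos n with h0 | h0
      · simp [h0]
      · exfalso
        have hs0 : Real.sqrt (2 * Vabs * n) = 0 := by
          apply Real.sqrt_eq_zero'.2
          have hnn : (0:ℝ) ≤ (n:ℝ) := Nat.cast_nonneg n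
          nlinarith
        have hn2 := hn.2
        rw [hS, Set.mem_setOf_eq, hs0] at hn2
        simp only [Real.cos_zero, Real.sin_zero, mul_zero, add_zero, abs_one] at hn2
        have hlt : Real.exp (-c * Real.sqrt n) < 1 := by
          rw [Real.exp_lt_one_iff]
          have hpos : (0:ℝ) < Real.sqrt n := Real.sqrt_pos.2 (by exact_mod_cast h0)
          nlinarith
        linarith
    unfold HasNatDensity
    apply squeeze_zero' (g := fun N : ℕ => 1 / (N:ℝ))
    · filter_upwards with N; positivity
    · filter_upwards [eventually_ge_atTop 1] with N hN1
      have hNpos : (0:ℝ) < (N:ℝ) := by exact_mod_cast hN1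
      have hcard : (((Finset.range (N + 1)).filter (fun n => n ∈ S)).card : ℝ) ≤ 1 := by
        have h1 := Finset.card_le_card (hsub N)
        simp only [Finset.card_singleton] at h1
        exact_mod_cast h1
      exact div_le_div_of_nonneg_right hcard hNpos.le
    · exact tendsto_const_nhds.div_atTop tendsto_natCast_atTop_atTop
  · have h2V : (0:ℝ) < 2 * Vabs := by linarith
    have ha : 0 < Real.sqrt (2 * Vabs) := Real.sqrt_pos.2 h2V
    have key := aux_density_zero (Real.sqrt (2 * Vabs)) c ha hc
    have hset : {n : ℕ |
        |Real.cos (Real.sqrt (2 * Vabs * n)) +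
            (-1 : ℝ) ^ (n + 1) * Real.sin (Real.sqrt (2 * Vabs * n))| ≤
          Real.exp (-c * Real.sqrt n)} =
        {n : ℕ | |Real.cos (Real.sqrt (2 * Vabs) * Real.sqrt n) +
            (-1 : ℝ) ^ (n + 1) * Real.sin (Real.sqrt (2 * Vabs) * Real.sqrt n)| ≤
          Real.exp (-c * Real.sqrt n)} := by
      ext n
      rw [Set.mem_setOf_eq, Set.mem_setOf_eq, Real.sqrt_mul h2V.le]
    rw [hset]
    exact key
end
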